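/- (Proposition 1, Cuturi–Doucet) The Legendre–Fenchel conjugate of the Sinkhorn distance MK_λ is given in closed form: for every (u,v) ∈ ℝ^{Ma}×ℝ^{Mb}, the supremum over (a,b) ∈ S of ⟨a,u⟩ + ⟨b,v⟩ − MK_λ(a,b) equals (1/λ) ∑_{i,j} e^{λ(u_i + v_j − C_{ij}) − 1}. -/

import Mathlib

open scoped BigOperators

/-- The transport polytope `P(a,b)`: nonnegative matrices with row sums `a`
and column sums `b`. -/
def transportPolytope {Ma Mb : ℕ} (a : Fin Ma → ℝ) (b : Fin Mb → ℝ) :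
    Set (Matrix (Fin Ma) (Fin Mb) ℝ) :=
  {P | (∀ i j, 0 ≤ P i j) ∧ (∀ i, ∑ j, P i j = a i) ∧ (∀ j, ∑ i, P i j = b j)}

/-- The entropy-regularized transport cost `⟨P,C⟩ + (1/λ)⟨P, log P⟩`.
(Note `Real.log 0 = 0` in Mathlib, so the convention `0 · log 0 = 0` holds.) -/
noncomputable def entTransportCost {Ma Mb : ℕ} (C : Matrix (Fin Ma) (Fin Mb) ℝ)
    (lam : ℝ) (P : Matrix (Fin Ma) (Fin Mb) ℝ) : ℝ :=
  (∑ i, ∑ j, P i j * C i j) + (1 / lam) * ∑ i, ∑ j, P i j * Real.log (P i j)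

/-- The Sinkhorn distance `MK_λ(a,b) = min_{P ∈ P(a,b)} ⟨P,C⟩ + (1/λ)⟨P, log P⟩`. -/
noncomputable def MKlam {Ma Mb : ℕ} (C : Matrix (Fin Ma) (Fin Mb) ℝ) (lam : ℝ)
    (a : Fin Ma → ℝ) (b : Fin Mb → ℝ) : ℝ :=
  sInf (entTransportCost C lam '' transportPolytope a b)

lemma sinkhorn_key (lam : ℝ) (hlam : 0 < lam) (s t : ℝ) (ht : 0 ≤ t) :
    t * s - 1 / lam * (t * Real.log t) ≤ 1 / lam * Real.exp (lam * s - 1) := by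
  rcases eq_or_lt_of_le ht with h | h
  · rw [← h]
    simp
    positivity
  · have h1 : lam * s - Real.log t ≤ Real.exp (lam * s - Real.log t - 1) :=
      by linarith [Real.add_one_le_exp (lam * s - Real.log t - 1)]
    have h2 : Real.exp (lam * s - Real.log t - 1) * t = Real.exp (lam * s - 1) := by
      rw [← Real.exp_log h, ← Real.exp_add, Real.exp_log h]
      ring_nf
    have h3 : t * (lam * s - Real.log t) ≤ Real.exp (lam * s - 1) := by
      nlinarith [mul_le_mul_of_nonneg_left h1 ht]
    rw [show t * s - 1 / lam * (t * Real.log t)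
        = 1 / lam * (t * (lam * s - Real.log t)) by field_simp]
    exact mul_le_mul_of_nonneg_left h3 (by positivity)

/-- Key lower bound: every feasible `P` has cost at least `⟨a,u⟩+⟨b,v⟩ − RHS`. -/
lemma sinkhorn_lb {Ma Mb : ℕ} (C : Matrix (Fin Ma) (Fin Mb) ℝ) (lam : ℝ)
    (hlam : 0 < lam) (u : Fin Ma → ℝ) (v : Fin Mb → ℝ)
    (a : Fin Ma → ℝ) (b : Fin Mb → ℝ) (P : Matrix (Fin Ma) (Fin Mb) ℝ)
    (hP : P ∈ transportPolytope a b) :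
    ∑ i, a i * u i + ∑ j, b j * v j
      - (1 / lam) * ∑ i, ∑ j, Real.exp (lam * (u i + v j - C i j) - 1)
      ≤ entTransportCost C lam P := by
  obtain ⟨hpos, hrow, hcol⟩ := hP
  have h1 : ∑ i, a i * u i = ∑ i, ∑ j, P i j * u i := by
    simp_rw [← hrow, Finset.sum_mul]
  have h2 : ∑ j, b j * v j = ∑ i, ∑ j, P i j * v j := by
    rw [Finset.sum_comm]
    simp_rw [← hcol, Finset.sum_mul]
  rw [h1, h2, entTransportCost]
  rw [show (∑ i, ∑ j, P i j * u i) + ∑ i, ∑ j, P i j * v j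
      - 1 / lam * ∑ i, ∑ j, Real.exp (lam * (u i + v j - C i j) - 1)
      = ∑ i, ∑ j, (P i j * u i + P i j * v j
          - 1 / lam * Real.exp (lam * (u i + v j - C i j) - 1)) by
    simp_rw [Finset.sum_sub_distrib, Finset.sum_add_distrib, Finset.mul_sum]]
  rw [show (∑ i, ∑ j, P i j * C i j) + 1 / lam * ∑ i, ∑ j, P i j * Real.log (P i j)
      = ∑ i, ∑ j, (P i j * C i j + 1 / lam * (P i j * Real.log (P i j))) by
    simp_rw [Finset.sum_add_distrib, Finset.mul_sum]]
  refine Finset.sum_le_sum fun i _ => Finset.sum_le_sum fun j _ => ?_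
  have := sinkhorn_key lam hlam (u i + v j - C i j) (P i j) (hpos i j)
  nlinarith [this]

/-- (Cuturi–Doucet) The Legendre–Fenchel conjugate of the Sinkhorn distance:
for every `(u,v)`, the supremum over `(a,b) ∈ S` of `⟨a,u⟩ + ⟨b,v⟩ − MK_λ(a,b)`
equals `(1/λ) ∑_{i,j} e^{λ(u_i + v_j − C_{ij}) − 1}`. -/
theorem sinkhorn_conjugate (Ma Mb : ℕ) (hMa : 0 < Ma) (hMb : 0 < Mb)
    (C : Matrix (Fin Ma) (Fin Mb) ℝ) (lam : ℝ) (hlam : 0 < lam)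
    (u : Fin Ma → ℝ) (v : Fin Mb → ℝ) :
    sSup {x : ℝ | ∃ (a : Fin Ma → ℝ) (b : Fin Mb → ℝ),
        (∀ i, 0 < a i) ∧ (∀ j, 0 < b j) ∧ (∑ i, a i = ∑ j, b j) ∧
        x = ∑ i, a i * u i + ∑ j, b j * v j - MKlam C lam a b}
      = (1 / lam) * ∑ i, ∑ j, Real.exp (lam * (u i + v j - C i j) - 1) := by
  haveI : Nonempty (Fin Ma) := Fin.pos_iff_nonempty.mp hMa
  haveI : Nonempty (Fin Mb) := Fin.pos_iff_nonempty.mp hMb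
  set E : Matrix (Fin Ma) (Fin Mb) ℝ :=
    fun i j => Real.exp (lam * (u i + v j - C i j) - 1) with hE
  set R : ℝ := (1 / lam) * ∑ i, ∑ j, E i j with hR
  -- the optimal plan's marginals
  set a : Fin Ma → ℝ := fun i => ∑ j, E i j with ha
  set b : Fin Mb → ℝ := fun j => ∑ i, E i j with hb
  have hapos : ∀ i, 0 < a i := fun i =>
    Finset.sum_pos (fun j _ => Real.exp_pos _) Finset.univ_nonempty
  have hbpos : ∀ j, 0 < b j := fun j =>
    Finset.sum_pos (fun i _ => Real.exp_pos _) Finset.univ_nonempty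
  have hab : ∑ i, a i = ∑ j, b j := Finset.sum_comm
  have hEmem : E ∈ transportPolytope a b :=
    ⟨fun i j => (Real.exp_pos _).le, fun i => rfl, fun j => rfl⟩
  -- value of the cost at E
  have hcostE : entTransportCost C lam E
      = ∑ i, a i * u i + ∑ j, b j * v j - R := by
    have hlog : ∀ i j, Real.log (E i j) = lam * (u i + v j - C i j) - 1 :=
      fun i j => Real.log_exp _
    have h1 : ∑ i, a i * u i = ∑ i, ∑ j, E i j * u i := by
      simp_rw [ha, Finset.sum_mul]
    have h2 : ∑ j, b j * v j = ∑ i, ∑ j, E i j * v j := by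
      rw [Finset.sum_comm]
      simp_rw [hb, Finset.sum_mul]
    rw [entTransportCost, h1, h2, hR]
    simp_rw [hlog]
    rw [show (∑ i, ∑ j, E i j * u i) + (∑ i, ∑ j, E i j * v j)
        - 1 / lam * ∑ i, ∑ j, E i j
        = ∑ i, ∑ j, (E i j * u i + E i j * v j - 1 / lam * E i j) by
      simp_rw [Finset.sum_sub_distrib, Finset.sum_add_distrib, Finset.mul_sum]]
    rw [show (∑ i, ∑ j, E i j * C i j)
        + 1 / lam * ∑ i, ∑ j, E i j * (lam * (u i + v j - C i j) - 1)
        = ∑ i, ∑ j, (E i j * C i j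
            + 1 / lam * (E i j * (lam * (u i + v j - C i j) - 1))) by
      simp_rw [Finset.sum_add_distrib, Finset.mul_sum]]
    refine Finset.sum_congr rfl fun i _ => Finset.sum_congr rfl fun j _ => ?_
    field_simp
    ring
  -- MKlam at (a,b) equals the cost at E
  have hMK : MKlam C lam a b = ∑ i, a i * u i + ∑ j, b j * v j - R := by
    refine le_antisymm ?_ ?_
    · calc MKlam C lam a b ≤ entTransportCost C lam E :=
            csInf_le ⟨∑ i, a i * u i + ∑ j, b j * v j - R, by
              rintro x ⟨P, hP, rfl⟩
              exact sinkhorn_lb C lam hlam u v a b P hP⟩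
            ⟨E, hEmem, rfl⟩
        _ = _ := hcostE
    · refine le_csInf ⟨entTransportCost C lam E, E, hEmem, rfl⟩ ?_
      rintro x ⟨P, hP, rfl⟩
      exact sinkhorn_lb C lam hlam u v a b P hP
  refine IsGreatest.csSup_eq ⟨⟨a, b, hapos, hbpos, hab, by rw [hMK]; ring⟩, ?_⟩
  rintro x ⟨a', b', ha', hb', hab', rfl⟩
  -- upper bound: for any (a',b') in S
  have hne : (transportPolytope a' b').Nonempty := by
    refine ⟨fun i j => a' i * b' j / ∑ k, a' k, fun i j => ?_, fun i => ?_, fun j => ?_⟩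
    · have h : 0 < ∑ k, a' k := Finset.sum_pos (fun k _ => ha' k) Finset.univ_nonempty
      exact le_of_lt (div_pos (mul_pos (ha' i) (hb' j)) h)
    · rw [← Finset.sum_div, ← Finset.mul_sum, ← hab', mul_div_assoc, div_self
        (ne_of_gt (Finset.sum_pos (fun k _ => ha' k) Finset.univ_nonempty)), mul_one]
    · rw [← Finset.sum_div, ← Finset.sum_mul, hab', mul_comm, mul_div_assoc, div_self
        (ne_of_gt (Finset.sum_pos (fun k _ => hb' k) Finset.univ_nonempty)), mul_one]
  have hlb : ∑ i, a' i * u i + ∑ j, b' j * v j - R ≤ MKlam C lam a' b' := by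
    refine le_csInf (hne.image _) ?_
    rintro x ⟨P, hP, rfl⟩
    exact sinkhorn_lb C lam hlam u v a' b' P hP
  linarith
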